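/- Let K be a compact subset of ℝⁿ and let f : K → ℝᵐ be continuous. For every ε > 0 there exists a radial neural network whose hidden layers all use the Step-ReLU activation, with N(f, K, ε) hidden layers whose widths are all equal to max(n, m) + 1 (input width n, output width m), whose feedforward function F : ℝⁿ → ℝᵐ satisfies |F(x) − f(x)| < ε for all x ∈ K. -/

import Mathlib

open scoped Classical
open Metric Set

noncomputable section

abbrev Euc (n : ℕ) := EuclideanSpace ℝ (Fin n)

def mulVecE {m n : ℕ} (W : Matrix (Fin m) (Fin n) ℝ) (v : Euc n) : Euc m :=
  WithLp.toLp 2 (fun j => ∑ k, W j k * v k)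

/-- Step-ReLU on ℝⁿ: the radial rescaling function sending v to v if ‖v‖ ≥ 1
and to 0 if ‖v‖ < 1. -/
def stepReLU {n : ℕ} (v : Euc n) : Euc n := if 1 ≤ ‖v‖ then v else 0

/-- N witnesses the covering property for f on K at scale ε: there are points
c₁, …, c_N ∈ K and radii r₁, …, r_N ∈ (0,1) such that the balls B_{rᵢ}(cᵢ)
cover K and f(B_{rᵢ}(cᵢ) ∩ K) ⊆ B_ε(f cᵢ) for all i. -/
def IsCoverSize {n m : ℕ} (f : Euc n → Euc m) (K : Set (Euc n)) (ε : ℝ) (N : ℕ) : Prop :=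
  ∃ (c : Fin N → Euc n) (r : Fin N → ℝ),
    (∀ i, c i ∈ K) ∧ (∀ i, r i ∈ Set.Ioo (0:ℝ) 1) ∧
    (K ⊆ ⋃ i, Metric.ball (c i) (r i)) ∧
    (∀ i, f '' (Metric.ball (c i) (r i) ∩ K) ⊆ Metric.ball (f (c i)) ε)

/-- N(f, K, ε): the minimal N as in IsCoverSize. -/
def coverNum {n m : ℕ} (f : Euc n → Euc m) (K : Set (Euc n)) (ε : ℝ) : ℕ :=
  sInf {N | IsCoverSize f K ε N}

/-- Iterating hidden layers of constant width k with Step-ReLU activations: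
hiddenStack k W b j maps the output of the first hidden layer through j further
hidden layers. -/
def hiddenStack (k : ℕ) (W : ℕ → Matrix (Fin k) (Fin k) ℝ) (b : ℕ → Euc k) :
    ℕ → Euc k → Euc k
  | 0 => fun v => v
  | (j+1) => fun v => stepReLU (mulVecE (W j) (hiddenStack k W b j v) + b j)

/-- The feedforward function of a radial neural network with input width n, exactly N
hidden layers all of width k with Step-ReLU activations, and a final affine layer into
ℝᵐ (with identity activation, a radial rescaling function).  For N = 0 the network is
the single affine layer x ↦ A₀ x + c₀; for N ≥ 1 it is
x ↦ A (ρ(W_{N-1} ⋯ ρ(W₀ x + b₀) ⋯ + b_{N-1})) + c. -/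
def constNet (n k m N : ℕ)
    (A₀ : Matrix (Fin m) (Fin n) ℝ) (c₀ : Euc m)
    (W₀ : Matrix (Fin k) (Fin n) ℝ) (b₀ : Euc k)
    (W : ℕ → Matrix (Fin k) (Fin k) ℝ) (b : ℕ → Euc k)
    (A : Matrix (Fin m) (Fin k) ℝ) (c : Euc m) : Euc n → Euc m :=
  match N with
  | 0 => fun x => mulVecE A₀ x + c₀
  | (N+1) => fun x =>
      mulVecE A (hiddenStack k W b N (stepReLU (mulVecE W₀ x + b₀))) + c

namespace UA

open Finset
open scoped RealInnerProductSpace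

/-- pad a vector with zeros up to width `k` -/
def padE {q k : ℕ} (v : Euc q) : Euc k :=
  WithLp.toLp 2 (fun i : Fin k => if h : (i : ℕ) < q then v ⟨i, h⟩ else 0)

def fl (n m : ℕ) : Fin (max n m + 1) := Fin.last (max n m)

def eFl (n m : ℕ) : Euc (max n m + 1) :=
  WithLp.toLp 2 (fun i : Fin (max n m + 1) => if i = fl n m then (1:ℝ) else 0)

def e0 (n m : ℕ) : Euc (max n m + 1) :=
  WithLp.toLp 2 (fun i : Fin (max n m + 1) => if (i : ℕ) = 0 then (1:ℝ) else 0)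

/-- scaling factor -/
def sc (r : ℝ) : ℝ := (Real.sqrt 3 / 2) / r

lemma sum_dite_lt {q k : ℕ} (h : q ≤ k) (G : Fin q → ℝ) :
    ∑ i : Fin k, (if hh : (i : ℕ) < q then G ⟨i, hh⟩ else 0) = ∑ t, G t := by
  rw [Fin.sum_univ_eq_sum_range (fun i => if hh : i < q then G ⟨i, hh⟩ else 0) k]
  rw [← Finset.sum_subset (Finset.range_subset_range.2 h)
    (fun i _ hi => by simp only [Finset.mem_range] at hi; rw [dif_neg hi])]
  rw [← Fin.sum_univ_eq_sum_range (fun i => if hh : i < q then G ⟨i, hh⟩ else 0) q]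
  exact Finset.sum_congr rfl fun i _ => by rw [dif_pos i.2]

lemma norm_padE {q k : ℕ} (h : q ≤ k) (v : Euc q) : ‖(padE v : Euc k)‖ = ‖v‖ := by
  rw [EuclideanSpace.norm_eq, EuclideanSpace.norm_eq]
  congr 1
  rw [← sum_dite_lt h (fun t => ‖v t‖ ^ 2)]
  apply Finset.sum_congr rfl
  intro i _
  by_cases hh : (i : ℕ) < q
  · simp [padE, hh]
  · simp [padE, hh]

lemma norm_eFl (n m : ℕ) : ‖eFl n m‖ = 1 := by
  rw [EuclideanSpace.norm_eq]
  have : ∀ i : Fin (max n m + 1), ‖eFl n m i‖ ^ 2 = if i = fl n m then 1 else 0 := by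
    intro i; by_cases h : i = fl n m <;> simp [eFl, h]
  rw [Finset.sum_congr rfl fun i _ => this i]
  simp

lemma norm_e0 (n m : ℕ) : ‖e0 n m‖ = 1 := by
  rw [EuclideanSpace.norm_eq]
  have : ∀ i : Fin (max n m + 1), ‖e0 n m i‖ ^ 2 = if i = (⟨0, Nat.succ_pos _⟩ : Fin (max n m + 1)) then 1 else 0 := by
    intro i
    by_cases h : (i : ℕ) = 0
    · rw [if_pos (Fin.ext h)]; simp [e0, h]; exact Fin.ext h
    · rw [if_neg (fun hc => h (by rw [hc]))]; simp [e0, h]; exact fun hc => h (by rw [hc]; rfl)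
  rw [Finset.sum_congr rfl fun i _ => this i]
  rw [Finset.sum_ite_eq']; simp

lemma padE_fl (n m : ℕ) {q : ℕ} (h : q ≤ max n m) (v : Euc q) :
    (padE v : Euc (max n m + 1)) (fl n m) = 0 := by
  simp only [padE, fl, Fin.val_last]
  rw [dif_neg (by omega)]

lemma inner_padE_eFl {n m q : ℕ} (h : q ≤ max n m) (v : Euc q) :
    ⟪(padE v : Euc (max n m + 1)), eFl n m⟫ = 0 := by
  rw [PiLp.inner_apply]
  simp only [RCLike.inner_apply, conj_trivial]
  have : ∀ i : Fin (max n m + 1),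
      (padE v : Euc (max n m +1)) i * eFl n m i
        = if i = fl n m then (padE v : Euc (max n m + 1)) (fl n m) else 0 := by
    intro i
    by_cases hi : i = fl n m
    · subst hi; simp [eFl]
    · simp [eFl, hi]
  rw [Finset.sum_congr rfl fun i _ => (mul_comm _ _).trans (this i)]
  rw [padE_fl n m h v]
  simp

lemma norm_pad_add_eFl_sq {n m q : ℕ} (h : q ≤ max n m) (v : Euc q) (s τ : ℝ) :
    ‖s • (padE v : Euc (max n m + 1)) + τ • eFl n m‖ ^ 2 = s ^ 2 * ‖v‖ ^ 2 + τ ^ 2 := by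
  rw [norm_add_sq_real]
  rw [real_inner_smul_left, real_inner_smul_right, inner_padE_eFl h v]
  rw [norm_smul, norm_smul, norm_padE (h.trans (Nat.le_succ _)) v, norm_eFl]
  simp [mul_pow, sq_abs]

def Uvec (n m : ℕ) (rr : ℝ) (cc x : Euc n) : Euc (max n m + 1) :=
  sc rr • (padE (x - cc) : Euc (max n m + 1)) + (2⁻¹ : ℝ) • eFl n m

def nuvec (n m : ℕ) (β rr : ℝ) (cc : Euc n) : Euc (max n m + 1) :=
  (β / rr) • e0 n m - sc rr • (padE cc : Euc (max n m + 1))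

def Pvec (n m : ℕ) (a β rr : ℝ) (cc : Euc n) (yy : Euc m) : Euc (max n m + 1) :=
  (a / rr) • (padE yy : Euc (max n m + 1)) + nuvec n m β rr cc + (2⁻¹ : ℝ) • eFl n m

def wvec (n m : ℕ) (a β rℓ rℓ' : ℝ) (cℓ : Euc n) (yℓ : Euc m) : Euc (max n m + 1) :=
  (-2 : ℝ) • ((a / rℓ') • (padE yℓ : Euc (max n m + 1)) + (rℓ / rℓ') • nuvec n m β rℓ cℓ)

def Lmat (n m : ℕ) (a β rℓ rℓ' : ℝ) (cℓ : Euc n) (yℓ : Euc m) :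
    Matrix (Fin (max n m + 1)) (Fin (max n m + 1)) ℝ :=
  fun i t => (if (t : ℕ) = (i : ℕ) ∧ (i : ℕ) ≠ max n m then rℓ / rℓ' else 0)
    + (if (t : ℕ) = max n m then wvec n m a β rℓ rℓ' cℓ yℓ i else 0)

def W0mat (n m : ℕ) (rr : ℝ) : Matrix (Fin (max n m + 1)) (Fin n) ℝ :=
  fun i t => if (i : ℕ) = (t : ℕ) then sc rr else 0

def Acol (n m : ℕ) (a β rr : ℝ) (cc : Euc n) (yy : Euc m) (j : Fin m) : ℝ :=
  2 * (-(yy j) - (rr / a) * nuvec n m β rr cc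
    ⟨(j : ℕ), Nat.lt_succ_of_lt (lt_of_lt_of_le j.2 (le_max_right n m))⟩)

def Amat (n m : ℕ) (a β rr : ℝ) (cc : Euc n) (yy : Euc m) :
    Matrix (Fin m) (Fin (max n m + 1)) ℝ :=
  fun j t => (if (t : ℕ) = (j : ℕ) then rr / a else 0)
    + (if (t : ℕ) = max n m then Acol n m a β rr cc yy j else 0)

lemma mulVecE_W0 (n m : ℕ) (rr : ℝ) (x : Euc n) (i : Fin (max n m + 1)) :
    mulVecE (W0mat n m rr) x i = if h : (i : ℕ) < n then sc rr * x ⟨i, h⟩ else 0 := by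
  unfold mulVecE W0mat
  simp only [WithLp.ofLp_toLp]
  by_cases h : (i : ℕ) < n
  · rw [dif_pos h, Finset.sum_eq_single (⟨(i : ℕ), h⟩ : Fin n)]
    · rw [if_pos rfl]
    · intro t _ ht
      rw [if_neg (fun hc => ht (Fin.ext hc.symm)), zero_mul]
    · simp
  · rw [dif_neg h]
    apply Finset.sum_eq_zero
    intro t _
    rw [if_neg (fun hc : (i:ℕ) = (t:ℕ) => h (hc ▸ t.2)), zero_mul]

lemma mulVecE_Lmat (n m : ℕ) (a β rℓ rℓ' : ℝ) (cℓ : Euc n) (yℓ : Euc m)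
    (v : Euc (max n m + 1)) (i : Fin (max n m + 1)) :
    mulVecE (Lmat n m a β rℓ rℓ' cℓ yℓ) v i
      = (if (i : ℕ) = max n m then 0 else (rℓ / rℓ') * v i)
        + wvec n m a β rℓ rℓ' cℓ yℓ i * v (fl n m) := by
  unfold mulVecE Lmat
  simp only [add_mul]
  rw [Finset.sum_add_distrib]
  congr 1
  · by_cases hi : (i : ℕ) = max n m
    · rw [if_pos hi]
      apply Finset.sum_eq_zero
      intro t _
      rw [if_neg (fun hc => hc.2 hi), zero_mul]
    · rw [if_neg hi, Finset.sum_eq_single i]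
      · rw [if_pos ⟨rfl, hi⟩]
      · intro t _ ht
        rw [if_neg (fun hc => ht (Fin.ext hc.1)), zero_mul]
      · simp
  · rw [Finset.sum_eq_single (fl n m)]
    · rw [if_pos (by simp [fl])]
    · intro t _ ht
      rw [if_neg (fun hc => ht (Fin.ext (by simpa [fl] using hc))), zero_mul]
    · simp

lemma mulVecE_Amat (n m : ℕ) (a β rr : ℝ) (cc : Euc n) (yy : Euc m)
    (v : Euc (max n m + 1)) (j : Fin m) :
    mulVecE (Amat n m a β rr cc yy) v j
      = (rr / a) * v ⟨(j : ℕ), Nat.lt_succ_of_lt (lt_of_lt_of_le j.2 (le_max_right n m))⟩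
        + Acol n m a β rr cc yy j * v (fl n m) := by
  unfold mulVecE Amat
  simp only [add_mul]
  rw [Finset.sum_add_distrib]
  congr 1
  · rw [Finset.sum_eq_single (⟨(j : ℕ), Nat.lt_succ_of_lt (lt_of_lt_of_le j.2 (le_max_right n m))⟩
      : Fin (max n m + 1))]
    · rw [if_pos rfl]
    · intro t _ ht
      rw [if_neg (fun hc => ht (Fin.ext hc)), zero_mul]
    · simp
  · rw [Finset.sum_eq_single (fl n m)]
    · rw [if_pos (by simp [fl])]
    · intro t _ ht
      rw [if_neg (fun hc => ht (Fin.ext (by simpa [fl] using hc))), zero_mul]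
    · simp

lemma nuvec_fl {n m : ℕ} (hm : 0 < max n m) (β rr : ℝ) (cc : Euc n) :
    nuvec n m β rr cc (fl n m) = 0 := by
  have h0 : ((fl n m : ℕ)) ≠ 0 := by simp [fl]; omega
  have h1 : fl n m ≠ 0 := fun hc => h0 (by rw [hc]; rfl)
  simp [nuvec, PiLp.sub_apply, PiLp.smul_apply, e0, h0, h1,
    padE_fl n m (le_max_left n m) cc]

lemma wvec_fl {n m : ℕ} (hm : 0 < max n m) (a β rℓ rℓ' : ℝ) (cℓ : Euc n) (yℓ : Euc m) :
    wvec n m a β rℓ rℓ' cℓ yℓ (fl n m) = 0 := by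
  simp [wvec, PiLp.add_apply, PiLp.smul_apply,
    padE_fl n m (le_max_right n m) yℓ, nuvec_fl hm]

lemma Uvec_fl {n m : ℕ} (rr : ℝ) (cc x : Euc n) :
    Uvec n m rr cc x (fl n m) = 2⁻¹ := by
  simp [Uvec, PiLp.add_apply, PiLp.smul_apply, padE_fl n m (le_max_left n m), eFl]

lemma Pvec_fl {n m : ℕ} (hm : 0 < max n m) (a β rr : ℝ) (cc : Euc n) (yy : Euc m) :
    Pvec n m a β rr cc yy (fl n m) = 2⁻¹ := by
  simp [Pvec, PiLp.add_apply, PiLp.smul_apply,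
    padE_fl n m (le_max_right n m) yy, nuvec_fl hm, eFl]

lemma T0 (n m : ℕ) (rr : ℝ) (cc x : Euc n) :
    mulVecE (W0mat n m rr) x + Uvec n m rr cc 0 = Uvec n m rr cc x := by
  ext i
  rw [PiLp.add_apply, mulVecE_W0]
  by_cases h : (i : ℕ) < n
  · simp only [Uvec, PiLp.add_apply, PiLp.smul_apply, smul_eq_mul, padE, dif_pos h,
      PiLp.sub_apply, PiLp.zero_apply]
    ring
  · simp only [Uvec, PiLp.add_apply, PiLp.smul_apply, smul_eq_mul, padE, dif_neg h,
      PiLp.sub_apply]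
    ring

lemma T1 {n m : ℕ} (a β rℓ rℓ' : ℝ) (hrℓ : rℓ ≠ 0) (hrℓ' : rℓ' ≠ 0)
    (hm : 0 < max n m) (cℓ cℓ' x : Euc n) (yℓ : Euc m) :
    mulVecE (Lmat n m a β rℓ rℓ' cℓ yℓ) (Uvec n m rℓ cℓ x) + Pvec n m a β rℓ' cℓ' yℓ
      = Uvec n m rℓ' cℓ' x := by
  ext i
  rw [PiLp.add_apply, mulVecE_Lmat, Uvec_fl]
  by_cases hiM : (i : ℕ) = max n m
  · have hifl : i = fl n m := Fin.ext (by simpa [fl] using hiM)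
    rw [if_pos hiM, hifl, wvec_fl hm, Pvec_fl hm, Uvec_fl]
    ring
  · have hifl : i ≠ fl n m := fun hc => hiM (by rw [hc]; simp [fl])
    rw [if_neg hiM]
    have hs : sc rℓ' = (rℓ / rℓ') * sc rℓ := by
      rw [sc, sc]; field_simp
    have hb : β / rℓ' = (rℓ / rℓ') * (β / rℓ) := by
      field_simp
    by_cases hin : (i : ℕ) < n <;> by_cases him : (i : ℕ) < m <;>
    · simp only [Uvec, Pvec, wvec, nuvec, PiLp.add_apply, PiLp.sub_apply, PiLp.smul_apply,
        smul_eq_mul, eFl, if_neg hifl, padE, dif_pos, dif_neg, hin, him, hs, hb,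
        PiLp.zero_apply, reduceDIte]
      ring

lemma T3 {n m : ℕ} (a β rℓ rℓ' : ℝ) (hrℓ : rℓ ≠ 0) (hrℓ' : rℓ' ≠ 0)
    (hm : 0 < max n m) (cℓ cℓ' : Euc n) (yℓ yj : Euc m) :
    mulVecE (Lmat n m a β rℓ rℓ' cℓ yℓ) (Pvec n m a β rℓ cℓ yj) + Pvec n m a β rℓ' cℓ' yℓ
      = Pvec n m a β rℓ' cℓ' yj := by
  ext i
  rw [PiLp.add_apply, mulVecE_Lmat, Pvec_fl hm]
  by_cases hiM : (i : ℕ) = max n m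
  · have hifl : i = fl n m := Fin.ext (by simpa [fl] using hiM)
    rw [if_pos hiM, hifl, wvec_fl hm, Pvec_fl hm, Pvec_fl hm]
    ring
  · have hifl : i ≠ fl n m := fun hc => hiM (by rw [hc]; simp [fl])
    rw [if_neg hiM]
    have ha' : (rℓ / rℓ') * (a / rℓ) = a / rℓ' := by
      field_simp
    simp only [Pvec, wvec, PiLp.add_apply, PiLp.sub_apply, PiLp.smul_apply,
      smul_eq_mul, eFl, if_neg hifl]
    linear_combination (padE yj i : ℝ) * ha'

lemma Tfin {n m : ℕ} (a β rr : ℝ) (ha : a ≠ 0) (hr : rr ≠ 0) (hm : 0 < max n m)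
    (cc : Euc n) (yj yN : Euc m) :
    mulVecE (Amat n m a β rr cc yN) (Pvec n m a β rr cc yj) + yN = yj := by
  ext j
  rw [PiLp.add_apply, mulVecE_Amat, Pvec_fl hm]
  have hjm : (j : ℕ) < max n m + 1 := Nat.lt_succ_of_lt (lt_of_lt_of_le j.2 (le_max_right n m))
  have hifl : (⟨(j : ℕ), hjm⟩ : Fin (max n m + 1)) ≠ fl n m := by
    intro hc
    have : (j : ℕ) = max n m := by simpa [fl] using congrArg Fin.val hc
    have := lt_of_lt_of_le j.2 (le_max_right n m)
    omega
  simp only [Pvec, Acol, PiLp.add_apply, PiLp.smul_apply, smul_eq_mul, eFl, if_neg hifl,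
    padE, dif_pos j.2]
  field_simp
  ring

lemma normU_sq {n m : ℕ} (rr : ℝ) (cc x : Euc n) :
    ‖Uvec n m rr cc x‖ ^ 2 = (sc rr) ^ 2 * ‖x - cc‖ ^ 2 + (2⁻¹ : ℝ) ^ 2 :=
  norm_pad_add_eFl_sq (le_max_left n m) _ _ _

lemma one_le_normU_iff {n m : ℕ} (rr : ℝ) (hr : 0 < rr) (cc x : Euc n) :
    1 ≤ ‖Uvec n m rr cc x‖ ↔ rr ≤ ‖x - cc‖ := by
  have hsc : (sc rr) ^ 2 = 3 / (4 * rr ^ 2) := by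
    rw [sc, div_pow, div_pow, Real.sq_sqrt (by norm_num : (0:ℝ) ≤ 3)]
    ring
  have key : 4 * rr ^ 2 * ‖Uvec n m rr cc x‖ ^ 2 = 3 * ‖x - cc‖ ^ 2 + rr ^ 2 := by
    rw [normU_sq, hsc]
    field_simp
    ring
  have hU0 : (0:ℝ) ≤ ‖Uvec n m rr cc x‖ := norm_nonneg _
  have hd0 : (0:ℝ) ≤ ‖x - cc‖ := norm_nonneg _
  constructor
  · intro h
    have hU2 : 1 ≤ ‖Uvec n m rr cc x‖ ^ 2 := by nlinarith
    have hd2 : rr ^ 2 ≤ ‖x - cc‖ ^ 2 := by nlinarith [mul_pos hr hr]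
    have := Real.sqrt_le_sqrt hd2
    rwa [Real.sqrt_sq hr.le, Real.sqrt_sq hd0] at this
  · intro h
    have hd2 : rr ^ 2 ≤ ‖x - cc‖ ^ 2 := by nlinarith
    have hU2 : 1 ≤ ‖Uvec n m rr cc x‖ ^ 2 := by nlinarith [mul_pos hr hr]
    have := Real.sqrt_le_sqrt hU2
    rwa [Real.sqrt_one, Real.sqrt_sq hU0] at this

lemma one_le_normP {n m : ℕ} (a β rr : ℝ) (hr : 0 < rr) (hr1 : rr ≤ 1)
    (ha : 0 < a) (hβ : 3 ≤ β) (cc : Euc n) (yy : Euc m)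
    (hy : (a / rr) * ‖yy‖ ≤ 1) (hc : sc rr * ‖cc‖ ≤ (β - 3) / rr) :
    1 ≤ ‖Pvec n m a β rr cc yy‖ := by
  have hP : Pvec n m a β rr cc yy
      = (β / rr) • e0 n m
        + ((a / rr) • (padE yy : Euc (max n m + 1)) - sc rr • (padE cc : Euc (max n m + 1))
          + (2⁻¹ : ℝ) • eFl n m) := by
    unfold Pvec nuvec
    module
  rw [hP]
  set A : Euc (max n m + 1) := (β / rr) • e0 n m with hA
  set B : Euc (max n m + 1) := (a / rr) • (padE yy : Euc (max n m + 1))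
    - sc rr • (padE cc : Euc (max n m + 1)) + (2⁻¹ : ℝ) • eFl n m with hB
  have h1 : ‖A‖ ≤ ‖A + B‖ + ‖B‖ := by
    have h := norm_add_le (A + B) (-B)
    have he : A + B + -B = A := by abel
    rw [he, norm_neg] at h
    exact h
  have h2 : ‖A‖ = β / rr := by
    rw [hA, norm_smul, norm_e0, mul_one, Real.norm_eq_abs, abs_of_pos (by positivity)]
  have h3 : ‖B‖ ≤ 1 + (β - 3) / rr + 2⁻¹ := by
    rw [hB]
    refine le_trans (norm_add_le _ _) ?_
    gcongr
    · refine le_trans (norm_sub_le _ _) ?_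
      gcongr
      · rw [norm_smul, norm_padE ((le_max_right n m).trans (Nat.le_succ _)) yy,
          Real.norm_eq_abs, abs_of_pos (by positivity)]
        exact hy
      · rw [norm_smul, norm_padE ((le_max_left n m).trans (Nat.le_succ _)) cc,
          Real.norm_eq_abs, abs_of_nonneg (by rw [sc]; positivity)]
        exact hc
    · rw [norm_smul, norm_eFl, mul_one, Real.norm_eq_abs,
        abs_of_pos (by norm_num : (0:ℝ) < 2⁻¹)]
  have h4 : (3:ℝ) ≤ 3 / rr := by
    rw [le_div_iff₀ hr]
    linarith
  have h5 : β / rr = (β - 3) / rr + 3 / rr := by ring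
  linarith

lemma stepReLU_of_one_le {k : ℕ} {v : Euc k} (h : 1 ≤ ‖v‖) : stepReLU v = v := if_pos h

lemma stepReLU_of_lt {k : ℕ} {v : Euc k} (h : ‖v‖ < 1) : stepReLU v = 0 := if_neg (not_le.2 h)

lemma mulVecE_zero {p q : ℕ} (W : Matrix (Fin p) (Fin q) ℝ) : mulVecE W (0 : Euc q) = 0 := by
  ext i
  simp [mulVecE]



lemma exists_coverSize' {n m : ℕ} (K : Set (Euc n)) (hK : IsCompact K)
    (f : Euc n → Euc m) (hf : ContinuousOn f K) (ε : ℝ) (hε : 0 < ε) :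
    ∃ N, IsCoverSize f K ε N := by
  have hcont := Metric.continuousOn_iff.1 hf
  choose δ hδpos hδ using fun (x : Euc n) (hx : x ∈ K) => hcont x hx ε hε
  obtain ⟨t, ht⟩ := hK.elim_finite_subcover
    (fun x : K => Metric.ball (x : Euc n) (min (δ x x.2) 2⁻¹))
    (fun x => Metric.isOpen_ball)
    (fun z hz => Set.mem_iUnion.2 ⟨⟨z, hz⟩,
      Metric.mem_ball_self (lt_min (hδpos z hz) (by norm_num))⟩)
  refine ⟨t.card, fun i => ((t.equivFin.symm i : ↥t) : ↥K),
    fun i => min (δ _ ((t.equivFin.symm i : ↥t) : ↥K).2) 2⁻¹, fun i => ?_, fun i => ?_, ?_, fun i => ?_⟩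
  · exact ((t.equivFin.symm i : ↥t) : ↥K).2
  · constructor
    · exact lt_min (hδpos _ _) (by norm_num)
    · exact lt_of_le_of_lt (min_le_right _ _) (by norm_num)
  · intro z hz
    obtain ⟨x, hmem⟩ := Set.mem_iUnion.1 (ht hz)
    obtain ⟨hxt, hzx⟩ := Set.mem_iUnion.1 hmem
    refine Set.mem_iUnion.2 ⟨t.equivFin ⟨x, hxt⟩, ?_⟩
    simpa only [Equiv.symm_apply_apply] using hzx
  · rintro w ⟨v, ⟨hv1, hv2⟩, rfl⟩
    rw [Metric.mem_ball] at hv1 ⊢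
    exact hδ _ _ v hv2 (lt_of_lt_of_le hv1 (min_le_left _ _))

theorem main_construction {n m : ℕ} (hm : 0 < m) (N' : ℕ)
    (K : Set (Euc n)) (f : Euc n → Euc m) (ε : ℝ)
    (c : Fin (N' + 1) → Euc n) (r : Fin (N' + 1) → ℝ)
    (hr : ∀ i, r i ∈ Set.Ioo (0:ℝ) 1)
    (hcov : K ⊆ ⋃ i, Metric.ball (c i) (r i))
    (himg : ∀ i, f '' (Metric.ball (c i) (r i) ∩ K) ⊆ Metric.ball (f (c i)) ε) :
    ∃ (W₀ : Matrix (Fin (max n m + 1)) (Fin n) ℝ) (b₀ : Euc (max n m + 1))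
      (W : ℕ → Matrix (Fin (max n m + 1)) (Fin (max n m + 1)) ℝ) (b : ℕ → Euc (max n m + 1))
      (A : Matrix (Fin m) (Fin (max n m + 1)) ℝ) (cv : Euc m),
      ∀ x, x ∈ K → ∀ j : Fin (N' + 1), x ∈ Metric.ball (c j) (r j) →
        (∀ j' : Fin (N' + 1), j' < j → x ∉ Metric.ball (c j') (r j')) →
        mulVecE A (hiddenStack (max n m + 1) W b N' (stepReLU (mulVecE W₀ x + b₀))) + cv
          = f (c j) := by
  haveI : Nonempty (Fin (N' + 1)) := ⟨0⟩
  have hmm : 0 < max n m := lt_of_lt_of_le hm (le_max_right n m)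
  set Ym := Finset.univ.sup' Finset.univ_nonempty (fun j => ‖f (c j)‖) with hYm
  set Rc := Finset.univ.sup' Finset.univ_nonempty (fun j => ‖c j‖) with hRcd
  set rmin := Finset.univ.inf' Finset.univ_nonempty r with hrmind
  set a := rmin / (1 + Ym) with ha_def
  set β := Real.sqrt 3 / 2 * Rc + 3 with hβ_def
  have hYle : ∀ j : Fin (N'+1), ‖f (c j)‖ ≤ Ym := by
    intro j
    rw [hYm]
    exact Finset.le_sup' (fun j => ‖f (c j)‖) (Finset.mem_univ j)
  have hRle : ∀ j : Fin (N'+1), ‖c j‖ ≤ Rc := by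
    intro j
    rw [hRcd]
    exact Finset.le_sup' (fun j => ‖c j‖) (Finset.mem_univ j)
  have hrle : ∀ j : Fin (N'+1), rmin ≤ r j := by
    intro j
    rw [hrmind]
    exact Finset.inf'_le r (Finset.mem_univ j)
  have hY0 : 0 ≤ Ym := le_trans (norm_nonneg (f (c 0))) (hYle 0)
  have hRc0 : 0 ≤ Rc := le_trans (norm_nonneg (c 0)) (hRle 0)
  have hrmin_pos : 0 < rmin := by
    rw [hrmind]
    rw [Finset.lt_inf'_iff]
    exact fun i _ => (hr i).1
  have ha : 0 < a := div_pos hrmin_pos (by linarith)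
  have hβ3 : 3 ≤ β := by
    rw [hβ_def]
    nlinarith [mul_nonneg (Real.sqrt_nonneg 3) hRc0]
  have hay : ∀ ℓ j : Fin (N' + 1), (a / r ℓ) * ‖f (c j)‖ ≤ 1 := by
    intro ℓ j
    have h1 : ‖f (c j)‖ ≤ Ym := hYle j
    have h2 : rmin ≤ r ℓ := hrle ℓ
    rw [div_mul_eq_mul_div, div_le_one (hr ℓ).1]
    have h3 : a * ‖f (c j)‖ ≤ rmin := by
      rw [ha_def, div_mul_eq_mul_div, div_le_iff₀ (by linarith : (0:ℝ) < 1 + Ym)]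
      nlinarith [norm_nonneg (f (c j))]
    linarith
  have hcβ : ∀ ℓ : Fin (N' + 1), sc (r ℓ) * ‖c ℓ‖ ≤ (β - 3) / r ℓ := by
    intro ℓ
    have h1 : ‖c ℓ‖ ≤ Rc := hRle ℓ
    have hb' : β - 3 = Real.sqrt 3 / 2 * Rc := by rw [hβ_def]; ring
    rw [hb', sc, div_mul_eq_mul_div]
    have h2 : Real.sqrt 3 / 2 * ‖c ℓ‖ ≤ Real.sqrt 3 / 2 * Rc := by
      nlinarith [Real.sqrt_nonneg 3]
    exact div_le_div_of_nonneg_right h2 (hr ℓ).1.le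
  set Wf : ℕ → Matrix (Fin (max n m + 1)) (Fin (max n m + 1)) ℝ := fun ℓ =>
    if h : ℓ + 1 < N' + 1 then
      Lmat n m a β (r ⟨ℓ, Nat.lt_of_succ_lt h⟩) (r ⟨ℓ+1, h⟩) (c ⟨ℓ, Nat.lt_of_succ_lt h⟩)
        (f (c ⟨ℓ, Nat.lt_of_succ_lt h⟩))
    else 0 with hWf
  set bf : ℕ → Euc (max n m + 1) := fun ℓ =>
    if h : ℓ + 1 < N' + 1 then
      Pvec n m a β (r ⟨ℓ+1, h⟩) (c ⟨ℓ+1, h⟩) (f (c ⟨ℓ, Nat.lt_of_succ_lt h⟩))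
    else 0 with hbf
  have key : ∀ ℓ, ∀ hℓ : ℓ < N' + 1, ∀ x, x ∈ K → ∀ j : Fin (N' + 1),
      x ∈ Metric.ball (c j) (r j) →
      (∀ j' : Fin (N' + 1), j' < j → x ∉ Metric.ball (c j') (r j')) →
      ((ℓ < (j:ℕ) → hiddenStack (max n m + 1) Wf bf ℓ
          (stepReLU (mulVecE (W0mat n m (r 0)) x + Uvec n m (r 0) (c 0) 0))
          = Uvec n m (r ⟨ℓ, hℓ⟩) (c ⟨ℓ, hℓ⟩) x) ∧
       ((j:ℕ) = ℓ → hiddenStack (max n m + 1) Wf bf ℓ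
          (stepReLU (mulVecE (W0mat n m (r 0)) x + Uvec n m (r 0) (c 0) 0)) = 0) ∧
       ((j:ℕ) < ℓ → hiddenStack (max n m + 1) Wf bf ℓ
          (stepReLU (mulVecE (W0mat n m (r 0)) x + Uvec n m (r 0) (c 0) 0))
          = Pvec n m a β (r ⟨ℓ, hℓ⟩) (c ⟨ℓ, hℓ⟩) (f (c j)))) := by
    intro ℓ
    induction ℓ with
    | zero =>
      intro hℓ x hx j hj hleast
      have hz : (⟨0, hℓ⟩ : Fin (N' + 1)) = 0 := by
        apply Fin.ext; simp
      have h0 : hiddenStack (max n m + 1) Wf bf 0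
          (stepReLU (mulVecE (W0mat n m (r 0)) x + Uvec n m (r 0) (c 0) 0))
          = stepReLU (Uvec n m (r 0) (c 0) x) := by
        rw [hiddenStack, T0]
      refine ⟨?_, ?_, ?_⟩
      · intro hlt
        have hnb : x ∉ Metric.ball (c 0) (r 0) := by
          apply hleast 0
          rw [Fin.lt_def]
          simpa using hlt
        rw [Metric.mem_ball, not_lt, dist_eq_norm] at hnb
        rw [h0, stepReLU_of_one_le ((one_le_normU_iff _ (hr 0).1 _ _).2 hnb), hz]
      · intro hj0
        have hje : j = 0 := by apply Fin.ext; simpa using hj0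
        rw [hje, Metric.mem_ball, dist_eq_norm] at hj
        have hlt : ‖Uvec n m (r 0) (c 0) x‖ < 1 := by
          rw [← not_le]
          rw [one_le_normU_iff _ (hr 0).1]
          exact not_le.2 hj
        rw [h0, stepReLU_of_lt hlt]
      · intro hcon
        exact absurd hcon (Nat.not_lt_zero _)
    | succ ℓ ih =>
      intro hℓ1 x hx j hj hleast
      have hℓ : ℓ < N' + 1 := Nat.lt_of_succ_lt hℓ1
      have ihs := ih hℓ x hx j hj hleast
      have hstep : hiddenStack (max n m + 1) Wf bf (ℓ + 1)
          (stepReLU (mulVecE (W0mat n m (r 0)) x + Uvec n m (r 0) (c 0) 0))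
          = stepReLU (mulVecE (Wf ℓ) (hiddenStack (max n m + 1) Wf bf ℓ
              (stepReLU (mulVecE (W0mat n m (r 0)) x + Uvec n m (r 0) (c 0) 0))) + bf ℓ) := rfl
      have hW : Wf ℓ = Lmat n m a β (r ⟨ℓ, hℓ⟩) (r ⟨ℓ+1, hℓ1⟩) (c ⟨ℓ, hℓ⟩) (f (c ⟨ℓ, hℓ⟩)) :=
        dif_pos hℓ1
      have hB : bf ℓ = Pvec n m a β (r ⟨ℓ+1, hℓ1⟩) (c ⟨ℓ+1, hℓ1⟩) (f (c ⟨ℓ, hℓ⟩)) :=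
        dif_pos hℓ1
      have hPnorm : ∀ jj : Fin (N' + 1),
          1 ≤ ‖Pvec n m a β (r ⟨ℓ+1, hℓ1⟩) (c ⟨ℓ+1, hℓ1⟩) (f (c jj))‖ := fun jj =>
        one_le_normP a β _ (hr _).1 (hr _).2.le ha hβ3 _ _ (hay _ jj) (hcβ _)
      refine ⟨?_, ?_, ?_⟩
      · intro hlt
        have hnb : x ∉ Metric.ball (c ⟨ℓ+1, hℓ1⟩) (r ⟨ℓ+1, hℓ1⟩) := by
          apply hleast
          rw [Fin.lt_def]
          exact hlt
        rw [Metric.mem_ball, not_lt, dist_eq_norm] at hnb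
        rw [hstep, hW, hB, ihs.1 (by omega),
          T1 a β _ _ (ne_of_gt (hr _).1) (ne_of_gt (hr _).1) hmm,
          stepReLU_of_one_le ((one_le_normU_iff _ (hr _).1 _ _).2 hnb)]
      · intro hje
        have hjeq : j = ⟨ℓ+1, hℓ1⟩ := Fin.ext hje
        rw [hjeq, Metric.mem_ball, dist_eq_norm] at hj
        have hlt2 : ‖Uvec n m (r ⟨ℓ+1, hℓ1⟩) (c ⟨ℓ+1, hℓ1⟩) x‖ < 1 := by
          rw [← not_le, one_le_normU_iff _ (hr _).1]
          exact not_le.2 hj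
        rw [hstep, hW, hB, ihs.1 (by omega),
          T1 a β _ _ (ne_of_gt (hr _).1) (ne_of_gt (hr _).1) hmm,
          stepReLU_of_lt hlt2]
      · intro hjlt
        by_cases hje : (j:ℕ) = ℓ
        · have hjeq : j = ⟨ℓ, hℓ⟩ := Fin.ext hje
          rw [hstep, hW, hB, ihs.2.1 hje, mulVecE_zero, zero_add,
            stepReLU_of_one_le (hPnorm ⟨ℓ, hℓ⟩), hjeq]
        · have hjl : (j:ℕ) < ℓ := by omega
          rw [hstep, hW, hB, ihs.2.2 hjl,
            T3 a β _ _ (ne_of_gt (hr _).1) (ne_of_gt (hr _).1) hmm,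
            stepReLU_of_one_le (hPnorm j)]
  refine ⟨W0mat n m (r 0), Uvec n m (r 0) (c 0) 0, Wf, bf,
    Amat n m a β (r (Fin.last N')) (c (Fin.last N')) (f (c (Fin.last N'))),
    f (c (Fin.last N')), ?_⟩
  intro x hx j hjmem hleast
  have hkey := key N' (Nat.lt_succ_self N') x hx j hjmem hleast
  have hlast : (⟨N', Nat.lt_succ_self N'⟩ : Fin (N' + 1)) = Fin.last N' := rfl
  by_cases hjN : (j:ℕ) = N'
  · rw [hkey.2.1 hjN, mulVecE_zero, zero_add,
      show j = Fin.last N' from Fin.ext (by simpa using hjN)]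
  · have hjlt : (j:ℕ) < N' := lt_of_le_of_ne (Nat.lt_succ_iff.1 j.2) hjN
    rw [hkey.2.2 hjlt, hlast]
    exact Tfin a β _ (ne_of_gt ha) (ne_of_gt (hr _).1) hmm _ _ _

end UA

/-- Let K ⊆ ℝⁿ be compact and f : K → ℝᵐ continuous.  For every
ε > 0 there is a radial neural network with N(f, K, ε) hidden layers all of width
max(n, m) + 1, Step-ReLU activations at all hidden layers, and a final affine layer into
ℝᵐ, whose feedforward function F satisfies ‖F x − f x‖ < ε for all x ∈ K. -/
theorem universal_approximation_max_plus_one {n m : ℕ}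
    (K : Set (Euc n)) (hK : IsCompact K)
    (f : Euc n → Euc m) (hf : ContinuousOn f K) (ε : ℝ) (hε : 0 < ε) :
    ∃ (A₀ : Matrix (Fin m) (Fin n) ℝ) (c₀ : Euc m)
      (W₀ : Matrix (Fin (max n m + 1)) (Fin n) ℝ) (b₀ : Euc (max n m + 1))
      (W : ℕ → Matrix (Fin (max n m + 1)) (Fin (max n m + 1)) ℝ) (b : ℕ → Euc (max n m + 1))
      (A : Matrix (Fin m) (Fin (max n m + 1)) ℝ) (c : Euc m),
      ∀ x ∈ K,
        ‖constNet n (max n m + 1) m (coverNum f K ε) A₀ c₀ W₀ b₀ W b A c x - f x‖ < ε := by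
  have hmem : IsCoverSize f K ε (coverNum f K ε) :=
    Nat.sInf_mem (UA.exists_coverSize' K hK f hf ε hε)
  rcases Nat.eq_zero_or_pos m with hm0 | hm
  · -- output dimension 0 : everything is trivial
    subst hm0
    refine ⟨0, 0, 0, 0, fun _ => 0, fun _ => 0, 0, 0, ?_⟩
    intro x hx
    have hz : ∀ v : Euc 0, v = 0 := fun v => by ext i; exact i.elim0
    rw [hz (constNet n (max n 0 + 1) 0 (coverNum f K ε) 0 0 0 0 (fun _ => 0) (fun _ => 0) 0 0 x
      - f x), norm_zero]
    exact hε
  cases hN : coverNum f K ε with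
  | zero =>
    rw [hN] at hmem
    obtain ⟨c, r, hcK, hr, hcov, himg⟩ := hmem
    refine ⟨0, 0, 0, 0, fun _ => 0, fun _ => 0, 0, 0, ?_⟩
    intro x hx
    obtain ⟨i, -⟩ := Set.mem_iUnion.1 (hcov hx)
    exact i.elim0
  | succ N' =>
    rw [hN] at hmem
    obtain ⟨c, r, hcK, hr, hcov, himg⟩ := hmem
    obtain ⟨W₀, b₀, W, b, A, cv, hnet⟩ :=
      UA.main_construction hm N' K f ε c r hr hcov himg
    refine ⟨0, 0, W₀, b₀, W, b, A, cv, ?_⟩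
    intro x hx
    have hSne : (Finset.univ.filter (fun j => x ∈ Metric.ball (c j) (r j))).Nonempty := by
      obtain ⟨j, hj⟩ := Set.mem_iUnion.1 (hcov hx)
      exact ⟨j, Finset.mem_filter.2 ⟨Finset.mem_univ j, hj⟩⟩
    obtain ⟨j, hjS, hjmin⟩ :=
      (Finset.univ.filter (fun j => x ∈ Metric.ball (c j) (r j))).exists_min_image id hSne
    have hjmem : x ∈ Metric.ball (c j) (r j) := (Finset.mem_filter.1 hjS).2
    have hleast : ∀ j' : Fin (N' + 1), j' < j → x ∉ Metric.ball (c j') (r j') := by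
      intro j' hlt hmem'
      exact absurd (hjmin j' (Finset.mem_filter.2 ⟨Finset.mem_univ j', hmem'⟩)) (not_le.2 hlt)
    have hcn : constNet n (max n m + 1) m (N' + 1) 0 0 W₀ b₀ W b A cv x
        = mulVecE A (hiddenStack (max n m + 1) W b N' (stepReLU (mulVecE W₀ x + b₀))) + cv :=
      rfl
    rw [hcn, hnet x hx j hjmem hleast]
    have himx : f x ∈ Metric.ball (f (c j)) ε := himg j ⟨x, ⟨hjmem, hx⟩, rfl⟩
    rw [Metric.mem_ball] at himx
    rw [← dist_eq_norm, dist_comm]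
    exact himx

end
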